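/- If T is a commuting n-tuple of invertible operators on H, and (X, U) is a unitary asymptote of T with norm-control κ, then (X, U^{-1}) is a unitary asymptote of T^{-1} with norm-control κ. -/

import Mathlib

open ContinuousLinearMap

/-- A commuting tuple of operators. -/
def CommutingTuple {n : ℕ} {H : Type} [NormedAddCommGroup H] [InnerProductSpace ℂ H]
    (T : Fin n → H →L[ℂ] H) : Prop :=
  ∀ i j, T i ∘L T j = T j ∘L T i

/-- A tuple of unitary operators. -/
def UnitaryTuple {n : ℕ} {K : Type} [NormedAddCommGroup K] [InnerProductSpace ℂ K]
    [CompleteSpace K] (U : Fin n → K →L[ℂ] K) : Prop :=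
  ∀ i, U i ∈ unitary (K →L[ℂ] K)

/-- `X` intertwines the tuple `T` with the tuple `U`. -/
def IntertwinesTuple {n : ℕ} {H K : Type} [NormedAddCommGroup H] [InnerProductSpace ℂ H]
    [NormedAddCommGroup K] [InnerProductSpace ℂ K]
    (T : Fin n → H →L[ℂ] H) (U : Fin n → K →L[ℂ] K) (X : H →L[ℂ] K) : Prop :=
  ∀ i, X ∘L T i = U i ∘L X

/-- `(X, U)` is a unitary asymptote of the commuting tuple `T`: it is a unitary
intertwining pair which is universal among all unitary intertwining pairs of `T`. -/
def IsUnitaryAsymptote {n : ℕ} {H K : Type}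
    [NormedAddCommGroup H] [InnerProductSpace ℂ H] [CompleteSpace H]
    [NormedAddCommGroup K] [InnerProductSpace ℂ K] [CompleteSpace K]
    (T : Fin n → H →L[ℂ] H) (U : Fin n → K →L[ℂ] K) (X : H →L[ℂ] K) : Prop :=
  UnitaryTuple U ∧ IntertwinesTuple T U X ∧
  ∀ (K' : Type) (_ : NormedAddCommGroup K') (_ : InnerProductSpace ℂ K')
    (_ : CompleteSpace K') (U' : Fin n → K' →L[ℂ] K') (X' : H →L[ℂ] K'),
    UnitaryTuple U' → IntertwinesTuple T U' X' →
    ∃! Y : K →L[ℂ] K', IntertwinesTuple U U' Y ∧ X' = Y ∘L X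

/-- Minimality of a unitary intertwining pair: the only closed subspace of `K`
containing the range of `X` and reducing every `U i` is `K` itself. -/
def MinimalPair {n : ℕ} {H K : Type}
    [NormedAddCommGroup H] [InnerProductSpace ℂ H]
    [NormedAddCommGroup K] [InnerProductSpace ℂ K] [CompleteSpace K]
    (U : Fin n → K →L[ℂ] K) (X : H →L[ℂ] K) : Prop :=
  ∀ M : Submodule ℂ K, IsClosed (M : Set K) → (∀ h, X h ∈ M) →
    (∀ i, ∀ y ∈ M, U i y ∈ M) → (∀ i, ∀ y ∈ M, adjoint (U i) y ∈ M) → M = ⊤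


/-- Norm-control with constant `κ` for the unitary intertwining pair `(X, U)`. -/
def HasNormControl {n : ℕ} {H K : Type}
    [NormedAddCommGroup H] [InnerProductSpace ℂ H]
    [NormedAddCommGroup K] [InnerProductSpace ℂ K] [CompleteSpace K]
    (U : Fin n → K →L[ℂ] K) (X : H →L[ℂ] K) (κ : ℝ) : Prop :=
  ∀ (K' : Type) (_ : NormedAddCommGroup K') (_ : InnerProductSpace ℂ K')
    (_ : CompleteSpace K') (U' : Fin n → K' →L[ℂ] K') (Y : K →L[ℂ] K'),
    UnitaryTuple U' → IntertwinesTuple U U' Y → ‖Y‖ ≤ κ * ‖Y ∘L X‖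

private lemma tw_generic {H K : Type} [NormedAddCommGroup H] [InnerProductSpace ℂ H]
    [NormedAddCommGroup K] [InnerProductSpace ℂ K]
    {A B : H →L[ℂ] H} {S S' : K →L[ℂ] K} {X : H →L[ℂ] K}
    (h1 : S' ∘L S = 1) (h2 : A ∘L B = 1) (h : X ∘L A = S ∘L X) :
    X ∘L B = S' ∘L X := by
  calc X ∘L B = (S' ∘L S) ∘L (X ∘L B) := by rw [h1, one_def, id_comp]
    _ = S' ∘L (((S ∘L X) ∘L B)) := by rw [comp_assoc, comp_assoc]
    _ = S' ∘L ((X ∘L (A ∘L B))) := by rw [← h, comp_assoc]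
    _ = S' ∘L X := by rw [h2]; simp [one_def]

private lemma unitary_comp' {K : Type} [NormedAddCommGroup K] [InnerProductSpace ℂ K]
    [CompleteSpace K] {S : K →L[ℂ] K} (hS : S ∈ unitary (K →L[ℂ] K)) :
    adjoint S ∘L S = 1 ∧ S ∘L adjoint S = 1 :=
  ⟨by have := hS.1; rwa [star_eq_adjoint, mul_def] at this, by have := hS.2; rwa [star_eq_adjoint, mul_def] at this⟩

/-- If `T` is a commuting tuple of invertible operators with unitary asymptote `(X, U)`
with norm-control `κ`, then `(X, U⁻¹)` is a unitary asymptote of `T⁻¹` with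
norm-control `κ`.  (Here `U i ⁻¹ = (U i)*` since the `U i` are unitary.) -/
theorem unitaryAsymptote_inverse {n : ℕ} {H K : Type}
    [NormedAddCommGroup H] [InnerProductSpace ℂ H] [CompleteSpace H]
    [NormedAddCommGroup K] [InnerProductSpace ℂ K] [CompleteSpace K]
    (T : Fin n → H →L[ℂ] H) (U : Fin n → K →L[ℂ] K) (X : H →L[ℂ] K) (κ : ℝ)
    (hT : CommutingTuple T) (hinv : ∀ i, IsUnit (T i))
    (hA : IsUnitaryAsymptote T U X) (hκ : HasNormControl U X κ) :
    IsUnitaryAsymptote (fun i => (((hinv i).unit⁻¹ : (H →L[ℂ] H)ˣ) : H →L[ℂ] H))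
      (fun i => adjoint (U i)) X ∧
    HasNormControl (fun i => adjoint (U i)) X κ := by
  obtain ⟨hUu, hUint, hUuniv⟩ := hA
  have hTB : ∀ i, T i ∘L (((hinv i).unit⁻¹ : (H →L[ℂ] H)ˣ) : H →L[ℂ] H) = 1 := fun i => by
    rw [← mul_def]; exact (hinv i).mul_val_inv
  have hBT : ∀ i, (((hinv i).unit⁻¹ : (H →L[ℂ] H)ˣ) : H →L[ℂ] H) ∘L T i = 1 := fun i => by
    rw [← mul_def]; exact (hinv i).val_inv_mul
  have hUadj : UnitaryTuple (fun i => adjoint (U i)) := fun i => by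
    show adjoint (U i) ∈ unitary (K →L[ℂ] K)
    rw [← star_eq_adjoint]; exact Unitary.star_mem (hUu i)
  refine ⟨⟨hUadj, ?_, ?_⟩, ?_⟩
  · intro i
    exact tw_generic (unitary_comp' (hUu i)).1 (hTB i) (hUint i)
  · intro K' _ _ _ U' X' hU' hX'
    have hX'T : IntertwinesTuple T (fun i => adjoint (U' i)) X' := by
      intro i
      show X' ∘L T i = adjoint (U' i) ∘L X'
      exact tw_generic (unitary_comp' (hU' i)).1 (hBT i) (hX' i)
    have hU'adj : UnitaryTuple (fun i => adjoint (U' i)) := fun i => by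
      show adjoint (U' i) ∈ unitary (K' →L[ℂ] K')
      rw [← star_eq_adjoint]; exact Unitary.star_mem (hU' i)
    obtain ⟨Y, ⟨hY1, hY2⟩, hYuniq⟩ :=
      hUuniv K' inferInstance inferInstance inferInstance (fun i => adjoint (U' i)) X' hU'adj hX'T
    have equiv : ∀ Z : K →L[ℂ] K', IntertwinesTuple U (fun i => adjoint (U' i)) Z ↔
        IntertwinesTuple (fun i => adjoint (U i)) U' Z := by
      intro Z
      constructor
      · intro hZ i
        have := tw_generic (h := hZ i) (unitary_comp' (hU' i)).2 (unitary_comp' (hUu i)).2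
        simpa [adjoint_adjoint] using this
      · intro hZ i
        exact tw_generic (h := hZ i) (unitary_comp' (hU' i)).1 (unitary_comp' (hUu i)).1
    exact ⟨Y, ⟨(equiv Y).1 hY1, hY2⟩, fun Z hZ => hYuniq Z ⟨(equiv Z).2 hZ.1, hZ.2⟩⟩
  · intro K' _ _ _ U'' Y hU'' hYint
    have hU''adj : UnitaryTuple (fun i => adjoint (U'' i)) := fun i => by
      show adjoint (U'' i) ∈ unitary (K' →L[ℂ] K')
      rw [← star_eq_adjoint]; exact Unitary.star_mem (hU'' i)
    have hYU : IntertwinesTuple U (fun i => adjoint (U'' i)) Y := fun i =>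
      tw_generic (h := hYint i) (unitary_comp' (hU'' i)).1 (unitary_comp' (hUu i)).1
    exact hκ K' inferInstance inferInstance inferInstance (fun i => adjoint (U'' i)) Y hU''adj hYU
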